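/- arXiv:1604.08149 — 8 statements merged into one kernel-verified Lean document; each statement's English description precedes it below -/
import Mathlib

section
/- Let P be a finite poset and B a nonempty subset of P. Define a binary relation ≤' on the quotient set P/B = (P \ B) ⊔ {B} by: x ≤' y iff either x = {B} and there exists x' ∈ B with x' ≤ y; or y = {B} and there exists y' ∈ B with x ≤ y'; or x, y ∈ P \ B and x ≤ y; or x, y ∈ P \ B and there exist b, b' ∈ B with x ≤ b and b' ≤ y. Then ≤' is a partial order on P/B if and only if B is convex in P. -/
/-- The relation `≤'` on the quotient set `P/B = (P \ B) ⊔ {B}`, where `none`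
represents the collapsed class `{B}` and `some x` an element of `P \ B`. -/
def quotLE {α : Type*} [PartialOrder α] (B : Set α) :
    Option {x : α // x ∉ B} → Option {x : α // x ∉ B} → Prop
  | none, none => True
  | none, some y => ∃ x' ∈ B, x' ≤ y.1
  | some x, none => ∃ y' ∈ B, x.1 ≤ y'
  | some x, some y => x.1 ≤ y.1 ∨ ∃ b ∈ B, ∃ b' ∈ B, x.1 ≤ b ∧ b' ≤ y.1

/-- The relation `≤'` on `P/B` is a partial order iff `B` is convex. -/
theorem stmt0 {α : Type*} [Fintype α] [PartialOrder α] (B : Set α) (hB : B.Nonempty) :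
    IsPartialOrder _ (quotLE B) ↔ ∀ x ∈ B, ∀ y ∈ B, ∀ z, x ≤ z → z ≤ y → z ∈ B := by
  constructor
  · intro h x hx y hy z hxz hzy
    by_contra hz
    have h1 : quotLE B (some ⟨z, hz⟩) none := ⟨y, hy, hzy⟩
    have h2 : quotLE B none (some ⟨z, hz⟩) := ⟨x, hx, hxz⟩
    exact Option.some_ne_none _ (h.antisymm _ _ h1 h2)
  · intro hconv
    refine { refl := ?_, trans := ?_, antisymm := ?_ }
    · rintro (_ | x)
      · trivial
      · exact Or.inl le_rfl
    · rintro (_ | x) (_ | y) (_ | z) h1 h2 <;> try trivial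
      · -- none, some y, some z
        obtain ⟨a, ha, hay⟩ := h1
        rcases h2 with h | ⟨b, hb, b', hb', _, hb'z⟩
        · exact ⟨a, ha, hay.trans h⟩
        · exact ⟨b', hb', hb'z⟩
      · -- some x, none, some z
        obtain ⟨a, ha, hxa⟩ := h1
        obtain ⟨b, hb, hbz⟩ := h2
        exact Or.inr ⟨a, ha, b, hb, hxa, hbz⟩
      · -- some x, some y, none
        obtain ⟨c, hc, hyc⟩ := h2
        rcases h1 with h | ⟨b, hb, b', hb', hxb, _⟩
        · exact ⟨c, hc, h.trans hyc⟩
        · exact ⟨b, hb, hxb⟩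
      · -- some some some
        rcases h1 with h1 | ⟨b, hb, b', hb', hxb, hb'y⟩
        · rcases h2 with h2 | ⟨c, hc, c', hc', hyc, hc'z⟩
          · exact Or.inl (h1.trans h2)
          · exact Or.inr ⟨c, hc, c', hc', h1.trans hyc, hc'z⟩
        · rcases h2 with h2 | ⟨c, hc, c', hc', hyc, hc'z⟩
          · exact Or.inr ⟨b, hb, b', hb', hxb, hb'y.trans h2⟩
          · exact Or.inr ⟨b, hb, c', hc', hxb, hc'z⟩
    · rintro (_ | x) (_ | y) h1 h2
      · rfl
      · obtain ⟨a, ha, hay⟩ := h1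
        obtain ⟨b, hb, hyb⟩ := h2
        exact absurd (hconv a ha b hb y.1 hay hyb) y.2
      · obtain ⟨a, ha, hax⟩ := h2
        obtain ⟨b, hb, hxb⟩ := h1
        exact absurd (hconv a ha b hb x.1 hax hxb) x.2
      · rcases h1 with h1 | ⟨b, hb, b', hb', hxb, hb'y⟩
        · rcases h2 with h2 | ⟨c, hc, c', hc', hyc, hc'x⟩
          · exact congrArg some (Subtype.ext (le_antisymm h1 h2))
          · exact absurd (hconv c' hc' c hc x.1 hc'x (h1.trans hyc)) x.2
        · rcases h2 with h2 | ⟨c, hc, c', hc', hyc, hc'x⟩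
          · exact absurd (hconv b' hb' b hb y.1 hb'y (h2.trans hxb)) y.2
          · exact absurd (hconv b' hb' c hc y.1 hb'y hyc) y.2
end

section
/- Let E be a set, ∼ an equivalence relation on E, ≈ an equivalence relation finer than ∼, and ≃ the induced equivalence relation on E/≈ (so that E/∼ ≅ (E/≈)/≃). Let R be a partial order on E/∼, S a partial order on E/≈, T the partial order on E/≈ obtained by saturation from R and S, S' a partial order on E, S'' the partial order on E obtained by saturation from S and S', and T' the partial order on E obtained by saturation from T and S'. Then T' equals the partial order on E obtained by saturation from R and S''. -/
/-- Saturation of a relation `R` on a quotient (along the projection `π`)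
with a relation `S` on the underlying set. -/
def sat {E Q : Type*} (π : E → Q) (R : Q → Q → Prop) (S : E → E → Prop) : E → E → Prop :=
  fun e e' => (π e ≠ π e' ∧ R (π e) (π e')) ∨ (π e = π e' ∧ S e e')

/-- Saturation by stages: saturating `T` (obtained from `R` and `S`) with `S'`
gives the same relation as saturating `R` with `S''` (obtained from `S` and `S'`). -/
theorem stmt2 {E : Type*} (apx sim : Setoid E)
    (hfine : ∀ e e', apx.r e e' → sim.r e e')
    (R : Quotient sim → Quotient sim → Prop)
    (S : Quotient apx → Quotient apx → Prop)
    (S' : E → E → Prop)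
    (hR : IsPartialOrder _ R) (hS : IsPartialOrder _ S) (hS' : IsPartialOrder _ S') :
    sat (Quotient.mk apx)
      (sat (Quotient.lift (Quotient.mk sim) (fun a b h => Quotient.sound (hfine a b h))) R S)
      S'
    = sat (Quotient.mk sim) R (sat (Quotient.mk apx) S S') := by
  funext e e'
  have hkey : Quotient.mk apx e = Quotient.mk apx e' → Quotient.mk sim e = Quotient.mk sim e' :=
    fun h => Quotient.sound (hfine e e' (Quotient.exact h))
  simp only [sat, Quotient.lift_mk, eq_iff_iff]
  tauto
end

section
/- The partial compositions •_a on finite posets satisfy nested associativity: for finite posets A, B, C with a ∈ A and b ∈ B, (A •_a B) •_b C = A •_a (B •_b C) as posets on (A \ {a}) ⊔ (B \ {b}) ⊔ C. -/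
/-- The relation of `A •_a B` on `(A \ {a}) ⊔ B`. -/
def bcomp {α β : Type*} (lA : α → α → Prop) (lB : β → β → Prop) (a : α) :
    ({x : α // x ≠ a} ⊕ β) → ({x : α // x ≠ a} ⊕ β) → Prop
  | .inl x, .inl y => lA x.1 y.1
  | .inr x, .inr y => lB x y
  | .inl x, .inr _ => lA x.1 a
  | .inr _, .inl y => lA a y.1

/-- The canonical identification of the underlying set of `(A •_a B) •_b C`
with that of `A •_a (B •_b C)`. -/
def nestMap {α β γ : Type*} (a : α) (b : β) :
    ({x : {x : α // x ≠ a} ⊕ β // x ≠ Sum.inr b} ⊕ γ) →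
      ({x : α // x ≠ a} ⊕ ({y : β // y ≠ b} ⊕ γ))
  | .inl ⟨.inl x, _⟩ => .inl x
  | .inl ⟨.inr y, h⟩ => .inr (.inl ⟨y, fun hy => h (by rw [hy])⟩)
  | .inr c => .inr (.inr c)

/-- Nested associativity for `•`: `(A •_a B) •_b C = A •_a (B •_b C)`. -/
theorem stmt4 {α β γ : Type*} [Fintype α] [Fintype β] [Fintype γ]
    [PartialOrder α] [PartialOrder β] [PartialOrder γ] (a : α) (b : β) :
    ∀ u v : ({x : {x : α // x ≠ a} ⊕ β // x ≠ Sum.inr b} ⊕ γ),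
      bcomp (bcomp ((· ≤ ·) : α → α → Prop) ((· ≤ ·) : β → β → Prop) a)
        ((· ≤ ·) : γ → γ → Prop) (Sum.inr b) u v ↔
      bcomp ((· ≤ ·) : α → α → Prop)
        (bcomp ((· ≤ ·) : β → β → Prop) ((· ≤ ·) : γ → γ → Prop) b) a
        (nestMap a b u) (nestMap a b v) := by
  rintro (⟨x|x,hx⟩|c) (⟨y|y,hy⟩|d) <;> simp [bcomp, nestMap]
end

section
/- The partial compositions •_a on finite posets satisfy parallel associativity: for finite posets A, B, C with distinct elements a, a' ∈ A, (A •_a B) •_{a'} C = (A •_{a'} C) •_a B as posets on (A \ {a, a'}) ⊔ B ⊔ C. -/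
/-- The canonical identification of the underlying set of `(A •_a B) •_{a'} C`
with that of `(A •_{a'} C) •_a B`. -/
def parMap {α β γ : Type*} (a a' : α) (hne : a ≠ a') :
    ({x : {x : α // x ≠ a} ⊕ β // x ≠ Sum.inl ⟨a', hne.symm⟩} ⊕ γ) →
      ({x : {x : α // x ≠ a'} ⊕ γ // x ≠ Sum.inl ⟨a, hne⟩} ⊕ β)
  | .inl ⟨.inl x, h⟩ =>
      .inl ⟨.inl ⟨x.1, fun hx => h (congrArg Sum.inl (Subtype.ext hx))⟩,
        fun hEq => x.2 (congrArg Subtype.val (Sum.inl.inj hEq))⟩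
  | .inl ⟨.inr y, _⟩ => .inr y
  | .inr c => .inl ⟨.inr c, fun h => by cases h⟩

/-- Parallel associativity for `•`: `(A •_a B) •_{a'} C = (A •_{a'} C) •_a B`. -/
theorem stmt5 {α β γ : Type*} [Fintype α] [Fintype β] [Fintype γ]
    [PartialOrder α] [PartialOrder β] [PartialOrder γ] (a a' : α) (hne : a ≠ a') :
    ∀ u v : ({x : {x : α // x ≠ a} ⊕ β // x ≠ Sum.inl ⟨a', hne.symm⟩} ⊕ γ),
      bcomp (bcomp ((· ≤ ·) : α → α → Prop) ((· ≤ ·) : β → β → Prop) a)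
        ((· ≤ ·) : γ → γ → Prop) (Sum.inl ⟨a', hne.symm⟩) u v ↔
      bcomp (bcomp ((· ≤ ·) : α → α → Prop) ((· ≤ ·) : γ → γ → Prop) a')
        ((· ≤ ·) : β → β → Prop) (Sum.inl ⟨a, hne⟩)
        (parMap a a' hne u) (parMap a a' hne v) := by
  rintro (⟨x|b,hx⟩|c) (⟨y|b',hy⟩|c') <;> simp [bcomp, parMap]
end

section
/- Every finite WN poset A can be written as A = A_1 ↓ A_2 ↓ ... ↓ A_k, where each A_i is either a singleton or a non-connected poset, and this decomposition is unique. -/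
/-- A poset is WN if it has no four-element subposet isomorphic to `N`, the
poset on `{x, y, z, t}` with relations `x < z`, `y < z`, `y < t` only. -/
def IsWN (α : Type*) [PartialOrder α] : Prop :=
  ¬ ∃ x y z t : α, x < z ∧ y < z ∧ y < t ∧
    ¬ x ≤ y ∧ ¬ y ≤ x ∧ ¬ x ≤ t ∧ ¬ t ≤ x ∧ ¬ z ≤ t ∧ ¬ t ≤ z

/-- The induced subposet on `s` is connected (via its comparability graph). -/
def ConnectedOn {α : Type*} [PartialOrder α] (s : Set α) : Prop :=
  ∀ x ∈ s, ∀ y ∈ s,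
    Relation.ReflTransGen (fun u v => u ∈ s ∧ v ∈ s ∧ (u ≤ v ∨ v ≤ u)) x y

namespace Stmt14Aux

variable {α : Type*}

def Reach (adj : α → α → Prop) (s : Set α) (x y : α) : Prop :=
  Relation.ReflTransGen (fun u v => u ∈ s ∧ v ∈ s ∧ adj u v) x y

theorem Reach.mono' {adj adj' : α → α → Prop} {s t : Set α}
    (hs : s ⊆ t) (h' : ∀ a b, adj a b → adj' a b) {x y : α}
    (h : Reach adj s x y) : Reach adj' t x y :=
  Relation.ReflTransGen.mono (r := fun u v => u ∈ s ∧ v ∈ s ∧ adj u v)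
    (p := fun u v => u ∈ t ∧ v ∈ t ∧ adj' u v)
    (fun a b hab => ⟨hs hab.1, hs hab.2.1, h' a b hab.2.2⟩) _ _ h

theorem Reach.symm' {adj : α → α → Prop} (hsym : ∀ a b, adj a b → adj b a)
    {s : Set α} {x y : α} (h : Reach adj s x y) : Reach adj s y x := by
  induction h with
  | refl => exact .refl
  | tail _ hbc ih =>
    exact Relation.ReflTransGen.trans
      (Relation.ReflTransGen.single ⟨hbc.2.1, hbc.1, hsym _ _ hbc.2.2⟩) ih

theorem Reach.trans' {adj : α → α → Prop} {s : Set α} {x y z : α}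
    (h : Reach adj s x y) (h' : Reach adj s y z) : Reach adj s x z :=
  Relation.ReflTransGen.trans h h'

/-- From a path from x to v in s, with x ≠ v, find a neighbor of v reachable from
x within s \ {v}. -/
theorem to_neighbor {adj : α → α → Prop} {s : Set α} {v : α} :
    ∀ {x : α}, Reach adj s x v → x ≠ v →
      ∃ y ∈ s \ {v}, Reach adj (s \ {v}) x y ∧ adj y v := by
  intro x h
  induction h using Relation.ReflTransGen.head_induction_on with
  | refl => intro h; exact absurd rfl h
  | @head a c h' hcv ih =>
    intro hav
    by_cases hc : c = v
    · subst hc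
      exact ⟨a, ⟨h'.1, hav⟩, .refl, h'.2.2⟩
    · obtain ⟨y, hy, hry, hyv⟩ := ih hc
      exact ⟨y, hy, Relation.ReflTransGen.head ⟨⟨h'.1, hav⟩, ⟨h'.2.1, hc⟩, h'.2.2⟩ hry, hyv⟩

/-- Along a path in t from a (non-neighbor of v) to b (neighbor of v), find an
edge from a non-neighbor to a neighbor, both reachable from a. -/
theorem cross {adj : α → α → Prop} {v : α} {t : Set α} :
    ∀ {a b : α}, Reach adj t a b → ¬ adj v a → adj v b →
      ∃ x y, x ∈ t ∧ y ∈ t ∧ Reach adj t a x ∧ adj x y ∧ ¬ adj v x ∧ adj v y ∧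
        Reach adj t a y := by
  intro a b h
  induction h using Relation.ReflTransGen.head_induction_on with
  | refl => intro h1 h2; exact absurd h2 h1
  | @head p q h' hqb ih =>
    intro hvp hvb
    by_cases hq : adj v q
    · exact ⟨p, q, h'.1, h'.2.1, .refl, h'.2.2, hvp, hq,
        Relation.ReflTransGen.single h'⟩
    · obtain ⟨x, y, hx, hy, hrx, hxy, hvx, hvy, hry⟩ := ih hq hvb
      exact ⟨x, y, hx, hy, Relation.ReflTransGen.head h' hrx, hxy, hvx, hvy,
        Relation.ReflTransGen.head h' hry⟩

/-- P4 pattern in adj with all four in s. -/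
def P4 (adj : α → α → Prop) (s : Set α) : Prop :=
  ∃ a b c d, a ∈ s ∧ b ∈ s ∧ c ∈ s ∧ d ∈ s ∧
    adj a b ∧ adj b c ∧ adj c d ∧ ¬ adj a c ∧ ¬ adj a d ∧ ¬ adj b d ∧
    a ≠ c ∧ a ≠ d ∧ b ≠ d

theorem helper {adj : α → α → Prop}
    (hsym : ∀ a b, adj a b → adj b a) (_hirr : ∀ a, ¬ adj a a)
    {s : Set α} {v : α} (hv : v ∈ s)
    (hconn : ∀ x ∈ s, ∀ y ∈ s, Reach adj s x y)
    (hcoconn : ∀ x ∈ s, ∀ y ∈ s, Reach (fun a b => a ≠ b ∧ ¬ adj a b) s x y)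
    (hdis : ∃ a ∈ s \ {v}, ∃ b ∈ s \ {v}, ¬ Reach adj (s \ {v}) a b) :
    P4 adj s := by
  obtain ⟨a, ha, b, hb, hab⟩ := hdis
  have hexu : ∃ u ∈ s \ {v}, ¬ adj v u := by
    by_contra hcon
    push_neg at hcon
    have hva : v ≠ a := fun e => ha.2 (by simp [← e])
    rcases (hcoconn v hv a ha.1).cases_head with he | ⟨c, hc, _⟩
    · exact hva he
    · have hct : c ∈ s \ {v} := ⟨hc.2.1, by simp; exact fun e => hc.2.2.1 e.symm⟩
      exact hc.2.2.2 (hcon c hct)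
  obtain ⟨u, hu, hvu⟩ := hexu
  have hexc : ∃ c ∈ s \ {v}, ¬ Reach adj (s \ {v}) u c := by
    by_cases h : Reach adj (s \ {v}) u a
    · exact ⟨b, hb, fun h' => hab (Reach.trans' (Reach.symm' hsym h) h')⟩
    · exact ⟨a, ha, h⟩
  obtain ⟨c, hc, huc⟩ := hexc
  have huv : u ≠ v := fun e => hu.2 (by simp [e])
  have hcv : c ≠ v := fun e => hc.2 (by simp [e])
  obtain ⟨y1, hy1t, hry1, hy1v⟩ := to_neighbor (hconn u hu.1 v hv) huv
  obtain ⟨x, y, hx, hy, hrx, hxy, hvx, hvy, hry⟩ :=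
    cross hry1 hvu (hsym _ _ hy1v)
  obtain ⟨z, hz, hrz, hzv⟩ := to_neighbor (hconn c hc.1 v hv) hcv
  have hucz : ¬ Reach adj (s \ {v}) u z :=
    fun h => huc (h.trans' (Reach.symm' hsym hrz))
  refine ⟨x, y, v, z, hx.1, hy.1, hv, hz.1, hxy, hsym _ _ hvy, hsym _ _ hzv,
    fun h => hvx (hsym _ _ h),
    fun h => hucz (hrx.tail ⟨hx, hz, h⟩),
    fun h => hucz (hry.tail ⟨hy, hz, h⟩),
    fun e => hx.2 (by simp [e]),
    fun e => hucz (e ▸ hrx),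
    fun e => hucz (e ▸ hry)⟩

theorem P4.mono {adj : α → α → Prop} {s t : Set α} (hst : s ⊆ t)
    (h : P4 adj s) : P4 adj t := by
  obtain ⟨a, b, c, d, ha, hb, hc, hd, h1, h2, h3, h4, h5, h6, h7, h8, h9⟩ := h
  exact ⟨a, b, c, d, hst ha, hst hb, hst hc, hst hd, h1, h2, h3, h4, h5, h6, h7, h8, h9⟩

theorem P4.ofCo {adj : α → α → Prop} (hsym : ∀ a b, adj a b → adj b a) {s : Set α}
    (h : P4 (fun a b => a ≠ b ∧ ¬ adj a b) s) : P4 adj s := by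
  obtain ⟨a, b, c, d, ha, hb, hc, hd, hab, hbc, hcd, hac, had, hbd, nac, nad, nbd⟩ := h
  have aac : adj a c := by by_contra h; exact hac ⟨nac, h⟩
  have aad : adj a d := by by_contra h; exact had ⟨nad, h⟩
  have abd : adj b d := by by_contra h; exact hbd ⟨nbd, h⟩
  exact ⟨c, a, d, b, hc, ha, hd, hb, hsym _ _ aac, aad, hsym _ _ abd,
    fun h => hcd.2 h, fun h => hbc.2 (hsym _ _ h), fun h => hab.2 h,
    hcd.1, Ne.symm hbc.1, hab.1⟩


theorem p4_main {adj : α → α → Prop}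
    (hsym : ∀ a b, adj a b → adj b a) (hirr : ∀ a, ¬ adj a a) :
    ∀ n : ℕ, ∀ s : Set α, s.ncard = n → 2 ≤ n →
      (∀ x ∈ s, ∀ y ∈ s, Reach adj s x y) →
      (∀ x ∈ s, ∀ y ∈ s, Reach (fun a b => a ≠ b ∧ ¬ adj a b) s x y) →
      P4 adj s := by
  intro n
  induction n using Nat.strong_induction_on with
  | _ n ih =>
    intro s hcard hn2 hconn hcoconn
    have hfin : s.Finite := by
      by_contra h
      rw [Set.Infinite.ncard h] at hcard
      omega
    rcases eq_or_lt_of_le hn2 with h2 | h3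
    · -- n = 2
      exfalso
      obtain ⟨x, y, hxy, rfl⟩ := Set.ncard_eq_two.mp (hcard.trans h2.symm)
      have hx : x ∈ ({x, y} : Set α) := by simp
      have hy : y ∈ ({x, y} : Set α) := by simp
      have haxy : adj x y := by
        rcases (hconn x hx y hy).cases_head with e | ⟨w, hw, _⟩
        · exact absurd e hxy
        · have hwx : w ≠ x := fun e => hirr x (e ▸ hw.2.2)
          have hwy : w = y := by
            rcases hw.2.1 with h | h
            · exact absurd h hwx
            · exact h
          exact hwy ▸ hw.2.2
      rcases (hcoconn x hx y hy).cases_head with e | ⟨w, hw, _⟩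
      · exact hxy e
      · have hwx : w ≠ x := fun e => hw.2.2.1 e.symm
        have hwy : w = y := by
          rcases hw.2.1 with h | h
          · exact absurd h hwx
          · exact h
        exact hw.2.2.2 (hwy ▸ haxy)
    · -- 3 ≤ n
      have hne : s.Nonempty := by
        rw [Set.nonempty_iff_ne_empty]
        intro h
        rw [h, Set.ncard_empty] at hcard
        omega
      obtain ⟨v, hv⟩ := hne
      have htc : (s \ {v}).ncard = n - 1 := by
        rw [Set.ncard_diff_singleton_of_mem hv, hcard]
      have hts : s \ {v} ⊆ s := Set.diff_subset
      by_cases hc1 : ∀ x ∈ s \ {v}, ∀ y ∈ s \ {v}, Reach adj (s \ {v}) x y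
      · by_cases hc2 : ∀ x ∈ s \ {v}, ∀ y ∈ s \ {v},
            Reach (fun a b => a ≠ b ∧ ¬ adj a b) (s \ {v}) x y
        · exact (ih (n - 1) (by omega) (s \ {v}) htc (by omega) hc1 hc2).mono hts
        · -- complement of s \ {v} disconnected: swap roles
          push_neg at hc2
          obtain ⟨x, hx, y, hy, hxy⟩ := hc2
          have hswap := helper (adj := fun a b => a ≠ b ∧ ¬ adj a b)
            (fun a b h => ⟨h.1.symm, fun h' => h.2 (hsym _ _ h')⟩)
            (fun a h => h.1 rfl) hv hcoconn
            (fun x hx y hy => (hconn x hx y hy).mono' (le_refl s)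
              (fun a b hab => ⟨fun e => hirr b (e ▸ hab), fun h => h.2 hab⟩))
            ⟨x, hx, y, hy, hxy⟩
          exact hswap.ofCo hsym
      · push_neg at hc1
        obtain ⟨x, hx, y, hy, hxy⟩ := hc1
        exact helper hsym hirr hv hconn hcoconn ⟨x, hx, y, hy, hxy⟩


-- ===== poset part =====
variable {α : Type*} [PartialOrder α]

def CutS (D : Set α) : Prop := ∀ x ∈ D, ∀ y ∉ D, x ≤ y

theorem cut_chain {D E : Set α} (hD : CutS D) (hE : CutS E) : D ⊆ E ∨ E ⊆ D := by
  by_contra h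
  push_neg at h
  obtain ⟨x, hxD, hxE⟩ := Set.not_subset.mp h.1
  obtain ⟨y, hyE, hyD⟩ := Set.not_subset.mp h.2
  have h1 : x ≤ y := hD x hxD y hyD
  have h2 : y ≤ x := hE y hyE x hxE
  exact hxE (le_antisymm h1 h2 ▸ hyE)

variable [Fintype α]

noncomputable def fdeg (x : α) : ℕ := {D : Set α | CutS D ∧ x ∉ D}.ncard

theorem fdeg_lt {D : Set α} (hD : CutS D) {x y : α} (hx : x ∈ D) (hy : y ∉ D) :
    fdeg x < fdeg y := by
  apply Set.ncard_lt_ncard _ (Set.toFinite _)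
  constructor
  · rintro E ⟨hE, hxE⟩
    refine ⟨hE, fun hyE => ?_⟩
    rcases cut_chain hD hE with h | h
    · exact hxE (h hx)
    · exact hy (h hyE)
  · intro h
    exact (h ⟨hD, hy⟩).2 hx

theorem exists_cut_of_fdeg_lt {x y : α} (h : fdeg x < fdeg y) :
    ∃ D : Set α, CutS D ∧ x ∈ D ∧ y ∉ D := by
  by_contra hc
  push_neg at hc
  have hsub : {D : Set α | CutS D ∧ y ∉ D} ⊆ {D : Set α | CutS D ∧ x ∉ D} := by
    rintro E ⟨hE, hyE⟩
    exact ⟨hE, fun hxE => hyE (hc E hE hxE)⟩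
  have := Set.ncard_le_ncard hsub (Set.toFinite _)
  rw [show  {D : Set α | CutS D ∧ y ∉ D}.ncard = fdeg y from rfl,
    show {D : Set α | CutS D ∧ x ∉ D}.ncard = fdeg x from rfl] at this
  omega

theorem le_of_fdeg_lt {x y : α} (h : fdeg x < fdeg y) : x ≤ y := by
  obtain ⟨D, hD, hx, hy⟩ := exists_cut_of_fdeg_lt h
  exact hD x hx y hy

theorem fdeg_mono {x y : α} (h : x ≤ y) : fdeg x ≤ fdeg y := by
  apply Set.ncard_le_ncard _ (Set.toFinite _)
  rintro E ⟨hE, hxE⟩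
  refine ⟨hE, fun hyE => ?_⟩
  exact hxE (le_antisymm h (hE y hyE x hxE) ▸ hyE)

theorem fdeg_lt_of_le_ne {x y : α} (hle : x ≤ y) (hne : fdeg x ≠ fdeg y) :
    fdeg x < fdeg y := lt_of_le_of_ne (fdeg_mono hle) hne


-- ===== comparability graph application =====

def adjC {α : Type*} [PartialOrder α] (u v : α) : Prop := u ≠ v ∧ (u ≤ v ∨ v ≤ u)

theorem adjC_symm {α : Type*} [PartialOrder α] : ∀ a b : α, adjC a b → adjC b a :=
  fun _ _ h => ⟨h.1.symm, h.2.symm⟩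

theorem adjC_irr {α : Type*} [PartialOrder α] : ∀ a : α, ¬ adjC a a := fun _ h => h.1 rfl

theorem connectedOn_reach {α : Type*} [PartialOrder α] {s : Set α} (h : ConnectedOn s) :
    ∀ x ∈ s, ∀ y ∈ s, Reach adjC s x y := by
  intro x hx y hy
  have hr := h x hx y hy
  clear hx hy
  induction hr with
  | refl => exact Relation.ReflTransGen.refl
  | @tail b c hxb step ih =>
    by_cases he : b = c
    · exact he ▸ ih
    · exact ih.tail ⟨step.1, step.2.1, he, step.2.2⟩

theorem no_p4 {α : Type*} [PartialOrder α] (hWN : IsWN α) (s : Set α) :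
    ¬ P4 (adjC (α := α)) s := by
  rintro ⟨a, b, c, d, -, -, -, -, hab, hbc, hcd, hac, had, hbd, nac, nad, nbd⟩
  have iac1 : ¬ a ≤ c := fun h => hac ⟨nac, Or.inl h⟩
  have iac2 : ¬ c ≤ a := fun h => hac ⟨nac, Or.inr h⟩
  have iad1 : ¬ a ≤ d := fun h => had ⟨nad, Or.inl h⟩
  have iad2 : ¬ d ≤ a := fun h => had ⟨nad, Or.inr h⟩
  have ibd1 : ¬ b ≤ d := fun h => hbd ⟨nbd, Or.inl h⟩
  have ibd2 : ¬ d ≤ b := fun h => hbd ⟨nbd, Or.inr h⟩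
  rcases hab.2 with h1 | h1 <;> rcases hbc.2 with h2 | h2
  · exact iac1 (h1.trans h2)
  · rcases hcd.2 with h3 | h3
    · exact hWN ⟨a, c, b, d, lt_of_le_of_ne h1 hab.1, lt_of_le_of_ne h2 hbc.1.symm,
        lt_of_le_of_ne h3 hcd.1, iac1, iac2, iad1, iad2, ibd1, ibd2⟩
    · exact ibd2 (h3.trans h2)
  · rcases hcd.2 with h3 | h3
    · exact ibd1 (h2.trans h3)
    · exact hWN ⟨d, b, c, a, lt_of_le_of_ne h3 hcd.1.symm, lt_of_le_of_ne h2 hbc.1,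
        lt_of_le_of_ne h1 hab.1.symm, ibd2, ibd1, iad2, iad1, iac2, iac1⟩
  · exact iac2 (h2.trans h1)

theorem fiber_not_connected {α : Type*} [PartialOrder α] [Fintype α] (hWN : IsWN α)
    {v : ℕ} {a b : α} (ha : fdeg a = v) (hb : fdeg b = v) (hab : a ≠ b) :
    ¬ ConnectedOn {x : α | fdeg x = v} := by
  intro hcon
  set s := {x : α | fdeg x = v} with hsdef
  have has : a ∈ s := ha
  have hbs : b ∈ s := hb
  have hconn := connectedOn_reach hcon
  by_cases hco : ∀ x ∈ s, ∀ y ∈ s, Reach (fun u w => u ≠ w ∧ ¬ adjC u w) s x y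
  · have h2 : 2 ≤ s.ncard := by
      have := (Set.one_lt_ncard_iff (Set.toFinite s)).mpr ⟨a, b, has, hbs, hab⟩
      omega
    exact no_p4 hWN s (p4_main adjC_symm adjC_irr s.ncard s rfl h2 hconn hco)
  · push_neg at hco
    obtain ⟨p, hp, q, hq, hpq⟩ := hco
    have hcosym : ∀ u w : α, (u ≠ w ∧ ¬ adjC u w) → (w ≠ u ∧ ¬ adjC w u) :=
      fun u w h => ⟨h.1.symm, fun h' => h.2 (adjC_symm _ _ h')⟩
    obtain ⟨m, hm, hmin⟩ : ∃ m ∈ s, ∀ y ∈ s, y ≤ m → m = y := by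
      obtain ⟨m, hm⟩ := exists_minimal_of_wellFoundedLT (· ∈ s) ⟨a, has⟩
      exact ⟨m, hm.prop, fun y hy hle => le_antisymm (hm.le_of_le hy hle) hle⟩
    have hmin' : ∀ y ∈ s, ¬ y < m := fun y hy hlt =>
      absurd (hmin y hy hlt.le).symm hlt.ne
    have key : ∀ x, Reach (fun u w => u ≠ w ∧ ¬ adjC u w) s m x →
        ∀ y ∈ s, ¬ Reach (fun u w => u ≠ w ∧ ¬ adjC u w) s m y → x ≤ y := by
      intro x hx
      induction hx with
      | refl =>
        intro y hy hny
        have hmy : m ≠ y := fun e => hny (e ▸ Relation.ReflTransGen.refl)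
        have hcomp : m ≤ y ∨ y ≤ m := by
          by_contra hcomp
          exact hny (Relation.ReflTransGen.single
            ⟨hm, hy, hmy, fun hadj => hcomp hadj.2⟩)
        rcases hcomp with h | h
        · exact h
        · exact absurd (lt_of_le_of_ne h hmy.symm) (hmin' y hy)
      | @tail zz cc hmz step ih =>
        intro y hy hny
        have hmc : Reach (fun u w => u ≠ w ∧ ¬ adjC u w) s m cc := hmz.tail step
        have hcy : cc ≠ y := fun e => hny (e ▸ hmc)
        have hcomp : cc ≤ y ∨ y ≤ cc := by
          by_contra hcomp
          exact hny (hmc.tail ⟨step.2.1, hy, hcy, fun hadj => hcomp hadj.2⟩)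
        rcases hcomp with h | h
        · exact h
        · exfalso
          have hzy : zz ≤ y := ih y hy hny
          exact step.2.2.2 ⟨step.2.2.1, Or.inl (hzy.trans h)⟩
    set D := {x : α | fdeg x < v} ∪
      {x : α | x ∈ s ∧ Reach (fun u w => u ≠ w ∧ ¬ adjC u w) s m x} with hDdef
    have hcut : CutS D := by
      intro x hx y hyD
      have hy1 : ¬ fdeg y < v := fun h => hyD (Set.mem_union_left _ h)
      have hy2 : ¬ (y ∈ s ∧ Reach (fun u w => u ≠ w ∧ ¬ adjC u w) s m y) :=
        fun h => hyD (Set.mem_union_right _ h)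
      rcases hx with hx | hx
      · exact le_of_fdeg_lt (lt_of_lt_of_le hx (not_lt.mp hy1))
      · rcases lt_or_eq_of_le (not_lt.mp hy1) with h | h
        · have hxv : fdeg x = v := hx.1
          exact le_of_fdeg_lt (by omega)
        · have hys : y ∈ s := h.symm
          exact key x hx.2 y hys (fun hr => hy2 ⟨hys, hr⟩)
    have hwex : ∃ w ∈ s, ¬ Reach (fun u w => u ≠ w ∧ ¬ adjC u w) s m w := by
      by_cases h : Reach (fun u w => u ≠ w ∧ ¬ adjC u w) s m p
      · exact ⟨q, hq, fun h' => hpq ((h.symm' hcosym).trans' h')⟩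
      · exact ⟨p, hp, h⟩
    obtain ⟨w, hws, hnw⟩ := hwex
    have hwD : w ∉ D := by
      rintro (h | h)
      · have h1 : fdeg w = v := hws
        have h2 : fdeg w < v := h
        omega
      · exact hnw h.2
    have hmD : m ∈ D := Set.mem_union_right _ ⟨hm, Relation.ReflTransGen.refl⟩
    have hlt := fdeg_lt hcut hmD hwD
    have h1 : fdeg m = v := hm
    have h2 : fdeg w = v := hws
    omega

-- ===== canonical decomposition =====

variable (α : Type*) [Fintype α] [PartialOrder α]

noncomputable def canonList : List (Set α) :=
  ((Finset.univ.image (fdeg (α := α))).sort (· ≤ ·)).map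
    (fun v => {x : α | fdeg x = v})

variable {α}

theorem canon_spec (hWN : IsWN α) [Nonempty α] :
    (∀ s ∈ canonList α, s.Nonempty) ∧
    (canonList α).Pairwise (fun s t => Disjoint s t) ∧
    (∀ x : α, ∃ s ∈ canonList α, x ∈ s) ∧
    (∀ x y : α, x ≤ y ↔ ∃ i j : Fin (canonList α).length,
      x ∈ (canonList α).get i ∧ y ∈ (canonList α).get j ∧
        ((i : ℕ) < (j : ℕ) ∨ (i = j ∧ x ≤ y))) ∧
    (∀ s ∈ canonList α, (∃ x, s = {x}) ∨ ¬ ConnectedOn s) := by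
  classical
  set F := Finset.univ.image (fdeg (α := α)) with hF
  set vals := F.sort (· ≤ ·) with hvals
  have hsorted : vals.Pairwise (· < ·) := (Finset.sortedLT_sort F).pairwise
  have hsm : StrictMono vals.get := hsorted.sortedLT.strictMono_get
  have hmemF : ∀ v, v ∈ vals ↔ ∃ x : α, fdeg x = v := by
    intro v
    rw [hvals, Finset.mem_sort, hF, Finset.mem_image]
    simp
  have hLlen : (canonList α).length = vals.length := List.length_map _
  have hget : ∀ (i : Fin (canonList α).length),
      (canonList α).get i = {x : α | fdeg x = vals.get ⟨i.1, by rw [← hLlen]; exact i.2⟩} := by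
    intro i
    exact List.getElem_map _
  refine ⟨?_, ?_, ?_, ?_, ?_⟩
  · -- nonempty
    intro s hs
    obtain ⟨v, hv, rfl⟩ := List.mem_map.mp hs
    obtain ⟨x, hx⟩ := (hmemF v).mp hv
    exact ⟨x, hx⟩
  · -- pairwise disjoint
    refine List.Pairwise.map _ ?_ hsorted
    intro v w hvw
    rw [Set.disjoint_left]
    rintro x (hx : fdeg x = v) (hx' : fdeg x = w)
    omega
  · -- cover
    intro x
    refine ⟨{y : α | fdeg y = fdeg x}, ?_, rfl⟩
    exact List.mem_map_of_mem ((hmemF (fdeg x)).mpr ⟨x, rfl⟩)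
  · -- order
    intro x y
    constructor
    · intro hxy
      obtain ⟨i0, hi0⟩ := List.mem_iff_get.mp ((hmemF (fdeg x)).mpr ⟨x, rfl⟩)
      obtain ⟨j0, hj0⟩ := List.mem_iff_get.mp ((hmemF (fdeg y)).mpr ⟨y, rfl⟩)
      have hle := fdeg_mono hxy
      rcases eq_or_lt_of_le hle with heq | hlt
      · refine ⟨⟨i0.1, by rw [hLlen]; exact i0.2⟩, ⟨i0.1, by rw [hLlen]; exact i0.2⟩,
          ?_, ?_, Or.inr ⟨rfl, hxy⟩⟩
        · rw [hget]
          show fdeg x = vals.get _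
          rw [← hi0]
        · rw [hget]
          show fdeg y = vals.get _
          rw [← heq, ← hi0]
      · have hij : i0 < j0 := by
          rw [← hsm.lt_iff_lt, hi0, hj0]
          exact hlt
        refine ⟨⟨i0.1, by rw [hLlen]; exact i0.2⟩, ⟨j0.1, by rw [hLlen]; exact j0.2⟩,
          ?_, ?_, Or.inl hij⟩
        · rw [hget]
          show fdeg x = vals.get _
          rw [← hi0]
        · rw [hget]
          show fdeg y = vals.get _
          rw [← hj0]
    · rintro ⟨i, j, hxi, hyj, hij | ⟨rfl, hxy⟩⟩
      · rw [hget] at hxi hyj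
        have hx : fdeg x = vals.get ⟨i.1, _⟩ := hxi
        have hy : fdeg y = vals.get ⟨j.1, _⟩ := hyj
        apply le_of_fdeg_lt
        rw [hx, hy]
        exact hsm (show (⟨i.1, _⟩ : Fin vals.length) < ⟨j.1, _⟩ from hij)
      · exact hxy
  · -- blocks singleton or disconnected
    intro s hs
    obtain ⟨v, hv, rfl⟩ := List.mem_map.mp hs
    by_cases hsing : ∃ x : α, {y : α | fdeg y = v} = {x}
    · exact Or.inl hsing
    · right
      obtain ⟨a, ha⟩ : ∃ x : α, fdeg x = v := (hmemF v).mp hv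
      have hne : {y : α | fdeg y = v} ≠ {a} := fun h => hsing ⟨a, h⟩
      have hsub : ({a} : Set α) ⊆ {y : α | fdeg y = v} := by
        rintro z rfl
        exact ha
      have hssub : {a} ⊂ {y : α | fdeg y = v} :=
        ⟨hsub, fun h => hne (le_antisymm h hsub)⟩
      obtain ⟨b, hb, hba⟩ := Set.exists_of_ssubset hssub
      have hbv : fdeg b = v := hb
      exact fiber_not_connected hWN hbv ha (fun h => hba (h ▸ rfl))

theorem canon_unique (L' : List (Set α))
    (h1 : ∀ s ∈ L', s.Nonempty)
    (h2 : L'.Pairwise (fun s t => Disjoint s t))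
    (h3 : ∀ x : α, ∃ s ∈ L', x ∈ s)
    (h4 : ∀ x y : α, x ≤ y ↔ ∃ i j : Fin L'.length,
      x ∈ L'.get i ∧ y ∈ L'.get j ∧ ((i : ℕ) < (j : ℕ) ∨ (i = j ∧ x ≤ y)))
    (h5 : ∀ s ∈ L', (∃ x, s = {x}) ∨ ¬ ConnectedOn s) :
    L' = canonList α := by
  classical
  set F := Finset.univ.image (fdeg (α := α)) with hF
  set vals := F.sort (· ≤ ·) with hvals
  have hsorted : vals.Pairwise (· < ·) := (Finset.sortedLT_sort F).pairwise
  have hvnodup : vals.Nodup := Finset.sort_nodup F _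
  have hmemF : ∀ v, v ∈ vals ↔ ∃ x : α, fdeg x = v := by
    intro v
    rw [hvals, Finset.mem_sort, hF, Finset.mem_image]
    simp
  have hgetmem : ∀ i : Fin L'.length, L'.get i ∈ L' := fun i => L'.get_mem i
  have hcov : ∀ x : α, ∃ i : Fin L'.length, x ∈ L'.get i := by
    intro x
    obtain ⟨s, hs, hx⟩ := h3 x
    obtain ⟨i, rfl⟩ := List.mem_iff_get.mp hs
    exact ⟨i, hx⟩
  have hdisj : ∀ i j : Fin L'.length, i ≠ j → Disjoint (L'.get i) (L'.get j) := by
    intro i j hij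
    rcases lt_or_gt_of_ne hij with h | h
    · exact List.pairwise_iff_get.mp h2 i j h
    · exact (List.pairwise_iff_get.mp h2 j i h).symm
  have hprefix : ∀ k : ℕ,
      CutS {x : α | ∃ i : Fin L'.length, i.1 < k ∧ x ∈ L'.get i} := by
    intro k x hx y hy
    obtain ⟨i, hik, hxi⟩ := hx
    obtain ⟨j, hyj⟩ := hcov y
    have hjk : ¬ j.1 < k := fun h => hy ⟨j, h, hyj⟩
    exact (h4 x y).mpr ⟨i, j, hxi, hyj, Or.inl (by omega)⟩
  have hnosplit : ∀ (i : Fin L'.length) (D : Set α), CutS D →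
      ∀ x ∈ L'.get i, ∀ y ∈ L'.get i, x ∈ D → y ∉ D → False := by
    intro i D hD x hxi y hyi hxD hyD
    rcases h5 (L'.get i) (hgetmem i) with ⟨z, hz⟩ | hnc
    · rw [hz] at hxi hyi
      have hx' : x = z := hxi
      have hy' : y = z := hyi
      exact hyD ((hx'.trans hy'.symm) ▸ hxD)
    · apply hnc
      intro u hu w hw
      by_cases huD : u ∈ D <;> by_cases hwD : w ∈ D
      · exact Relation.ReflTransGen.tail (Relation.ReflTransGen.single
          ⟨hu, hyi, Or.inl (hD u huD y hyD)⟩) ⟨hyi, hw, Or.inr (hD w hwD y hyD)⟩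
      · exact Relation.ReflTransGen.single ⟨hu, hw, Or.inl (hD u huD w hwD)⟩
      · exact Relation.ReflTransGen.single ⟨hu, hw, Or.inr (hD w hwD u huD)⟩
      · exact Relation.ReflTransGen.tail (Relation.ReflTransGen.single
          ⟨hu, hxi, Or.inr (hD x hxD u huD)⟩) ⟨hxi, hw, Or.inl (hD x hxD w hwD)⟩
  have hsame : ∀ (i : Fin L'.length) (x y : α), x ∈ L'.get i → y ∈ L'.get i →
      fdeg x = fdeg y := by
    intro i x y hx hy
    by_contra hne
    rcases Nat.lt_or_ge (fdeg x) (fdeg y) with h | h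
    · obtain ⟨D, hD, hxD, hyD⟩ := exists_cut_of_fdeg_lt h
      exact hnosplit i D hD x hx y hy hxD hyD
    · have h' : fdeg y < fdeg x := by omega
      obtain ⟨D, hD, hyD, hxD⟩ := exists_cut_of_fdeg_lt h'
      exact hnosplit i D hD y hy x hx hyD hxD
  have hltblk : ∀ (i j : Fin L'.length), i.1 < j.1 → ∀ x y, x ∈ L'.get i →
      y ∈ L'.get j → fdeg x < fdeg y := by
    intro i j hij x y hx hy
    apply fdeg_lt (hprefix (i.1 + 1)) (x := x) (y := y)
    · exact ⟨i, by omega, hx⟩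
    · rintro ⟨i', hi', hyi'⟩
      have hne : i' ≠ j := by
        intro e
        rw [e] at hi'
        omega
      exact Set.disjoint_left.mp (hdisj i' j hne) hyi' hy
  have hne' : ∀ i : Fin L'.length, (L'.get i).Nonempty := fun i => h1 _ (hgetmem i)
  set g : Fin L'.length → ℕ := fun i => fdeg (hne' i).some with hg
  have hgmem : ∀ i, (hne' i).some ∈ L'.get i := fun i => (hne' i).some_mem
  have hgsm : StrictMono g := fun i j hij => hltblk i j hij _ _ (hgmem i) (hgmem j)
  have hfiber : ∀ i : Fin L'.length, L'.get i = {x : α | fdeg x = g i} := by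
    intro i
    ext x
    constructor
    · intro hx
      exact hsame i x _ hx (hgmem i)
    · intro hx
      obtain ⟨j, hj⟩ := hcov x
      have hxj : fdeg x = g j := hsame j x _ hj (hgmem j)
      have hij : i = j := hgsm.injective (by rw [← hx, ← hxj])
      rw [hij]
      exact hj
  set M := List.ofFn g with hM
  have hMlen : M.length = L'.length := List.length_ofFn (f := g)
  have hMget : ∀ i : Fin M.length, M.get i = g ⟨i.1, by rw [← hMlen]; exact i.2⟩ := by
    intro i
    rw [List.get_ofFn]
  have hMsorted : M.Pairwise (· < ·) := by
    rw [List.pairwise_iff_get]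
    intro i j hij
    rw [hMget i, hMget j]
    exact hgsm hij
  have hMnodup : M.Nodup := List.nodup_ofFn.mpr hgsm.injective
  have htf : M.toFinset = vals.toFinset := by
    ext w
    simp only [List.mem_toFinset]
    rw [hM, List.mem_ofFn, hmemF w]
    constructor
    · rintro ⟨i, rfl⟩
      exact ⟨(hne' i).some, rfl⟩
    · rintro ⟨x, rfl⟩
      obtain ⟨j, hj⟩ := hcov x
      exact ⟨j, (hsame j x _ hj (hgmem j)).symm⟩
  haveI : IsAntisymm ℕ (· < ·) := ⟨fun a b h h' => absurd (h.trans h') (lt_irrefl a)⟩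
  have hMv : M = vals := List.Perm.eq_of_pairwise' hMsorted hsorted
    (List.perm_of_nodup_nodup_toFinset_eq hMnodup hvnodup htf)
  have hclen : (canonList α).length = vals.length := List.length_map _
  have hlen : L'.length = (canonList α).length := by
    rw [hclen, ← hMv, hMlen]
  apply List.ext_get hlen
  intro n hn1 hn2
  have hnv : n < vals.length := by rw [← hclen]; exact hn2
  have hnM : n < M.length := by rw [hMlen]; exact hn1
  have hcg : (canonList α).get ⟨n, hn2⟩ = {x : α | fdeg x = vals.get ⟨n, hnv⟩} :=
    List.getElem_map _
  have hvg : vals.get ⟨n, hnv⟩ = g ⟨n, hn1⟩ := by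
    have h' := List.get_of_eq hMv ⟨n, hnM⟩
    rw [hMget ⟨n, hnM⟩] at h'
    exact h'.symm
  rw [hcg, hvg, hfiber ⟨n, hn1⟩]

end Stmt14Aux

/-- Every finite WN poset decomposes uniquely as `A = A₁ ↓ ⋯ ↓ A_k`, where each
`A_i` is a singleton or a non-connected poset. The decomposition is encoded by
the ordered list of the (nonempty, pairwise disjoint, covering) blocks
`A₁, …, A_k`, the order of `A` being the ordinal sum along the list. -/
theorem stmt14 {α : Type*} [Fintype α] [PartialOrder α] [Nonempty α]
    (hWN : IsWN α) :
    ∃! L : List (Set α),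
      (∀ s ∈ L, s.Nonempty) ∧
      L.Pairwise (fun s t => Disjoint s t) ∧
      (∀ x : α, ∃ s ∈ L, x ∈ s) ∧
      (∀ x y : α, x ≤ y ↔ ∃ i j : Fin L.length,
        x ∈ L.get i ∧ y ∈ L.get j ∧ ((i : ℕ) < (j : ℕ) ∨ (i = j ∧ x ≤ y))) ∧
      (∀ s ∈ L, (∃ x, s = {x}) ∨ ¬ ConnectedOn s) :=
  ⟨Stmt14Aux.canonList α, Stmt14Aux.canon_spec hWN,
    fun L' h => Stmt14Aux.canon_unique L' h.1 h.2.1 h.2.2.1 h.2.2.2.1 h.2.2.2.2⟩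
end

section
/- Let A and B be finite posets. Then A ↓ B is WN if and only if both A and B are WN. -/
/-- A relation (thought of as a partial order) is WN if it has no four-element
subposet isomorphic to `N`, the poset on `{x, y, z, t}` with relations
`x < z`, `y < z`, `y < t` only. Here `u < v` means `r u v ∧ ¬ r v u`. -/
def IsWNRel {γ : Type*} (r : γ → γ → Prop) : Prop :=
  ¬ ∃ x y z t : γ,
    (r x z ∧ ¬ r z x) ∧ (r y z ∧ ¬ r z y) ∧ (r y t ∧ ¬ r t y) ∧
    ¬ r x y ∧ ¬ r y x ∧ ¬ r x t ∧ ¬ r t x ∧ ¬ r z t ∧ ¬ r t z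

/-- The ordinal sum `A ↓ B` on `A ⊔ B`. -/
def osum {α β : Type*} (lA : α → α → Prop) (lB : β → β → Prop) :
    (α ⊕ β) → (α ⊕ β) → Prop
  | .inl x, .inl y => lA x y
  | .inr x, .inr y => lB x y
  | .inl _, .inr _ => True
  | .inr _, .inl _ => False

/-- `A ↓ B` is WN iff both `A` and `B` are WN. -/
theorem stmt15 {α β : Type*} [Fintype α] [Fintype β] [PartialOrder α] [PartialOrder β] :
    IsWNRel (osum ((· ≤ ·) : α → α → Prop) ((· ≤ ·) : β → β → Prop)) ↔
      IsWNRel ((· ≤ ·) : α → α → Prop) ∧ IsWNRel ((· ≤ ·) : β → β → Prop) := by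
  constructor
  · intro h
    constructor
    · rintro ⟨x, y, z, t, hx⟩
      exact h ⟨.inl x, .inl y, .inl z, .inl t, by simpa [osum] using hx⟩
    · rintro ⟨x, y, z, t, hx⟩
      exact h ⟨.inr x, .inr y, .inr z, .inr t, by simpa [osum] using hx⟩
  · rintro ⟨hA, hB⟩ ⟨x, y, z, t, hx⟩
    cases x <;> cases y <;> cases z <;> cases t <;> simp [osum] at hx
    · exact hA ⟨_, _, _, _, hx⟩
    · exact hB ⟨_, _, _, _, hx⟩
end

section
/- Let A and B be finite WN posets, and a ∈ A. Then the poset A •_a B (substitution of B at the vertex a) is WN. -/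
/-- If `A` and `B` are finite WN posets and `a ∈ A`, then `A •_a B` is WN. -/
theorem stmt17 {α β : Type*} [Fintype α] [Fintype β] [PartialOrder α] [PartialOrder β]
    (hA : IsWNRel ((· ≤ ·) : α → α → Prop)) (hB : IsWNRel ((· ≤ ·) : β → β → Prop))
    (a : α) :
    IsWNRel (bcomp ((· ≤ ·) : α → α → Prop) ((· ≤ ·) : β → β → Prop) a) := by
  rintro ⟨x | x, y | y, z | z, t | t, h⟩ <;>
    simp only [bcomp] at h <;>
    first
      | exact hA ⟨_, _, _, _, h⟩
      | exact hB ⟨_, _, _, _, h⟩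
      | exact hA ⟨a, _, _, _, h⟩
      | exact hA ⟨_, a, _, _, h⟩
      | exact hA ⟨_, _, a, _, h⟩
      | exact hA ⟨_, _, _, a, h⟩
      | tauto
end

section
/- Let A be a finite connected poset with at least two maximal elements that is WN. Define A' = {x ∈ A : x ≤ M for all maximal elements M of A} and A'' = A \ A'. Then A' and A'' are nonempty, every minimal element of A lies in A', every maximal element lies in A'', and A = A' ↓ A'' (every element of A' is below every element of A''). -/
/-- Let `A` be a finite connected WN poset with at least two maximal elements,
and `A' = {x : x ≤ M for every maximal M}`, `A'' = A \ A'`. Then `A'` and `A''`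
are nonempty, minimal elements lie in `A'`, maximal elements lie in `A''`, and
`A = A' ↓ A''`. -/
theorem stmt19 {α : Type*} [Fintype α] [PartialOrder α]
    (hconn : ∀ x y : α, Relation.ReflTransGen (fun u v => u ≤ v ∨ v ≤ u) x y)
    (hWN : IsWN α)
    (hmax : ∃ M M' : α, M ≠ M' ∧ (∀ z, M ≤ z → z = M) ∧ (∀ z, M' ≤ z → z = M')) :
    ({x : α | ∀ M, (∀ z, M ≤ z → z = M) → x ≤ M}).Nonempty ∧
    ({x : α | ∀ M, (∀ z, M ≤ z → z = M) → x ≤ M})ᶜ.Nonempty ∧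
    (∀ x : α, (∀ z, z ≤ x → z = x) → x ∈ {x : α | ∀ M, (∀ z, M ≤ z → z = M) → x ≤ M}) ∧
    (∀ x : α, (∀ z, x ≤ z → z = x) → x ∉ {x : α | ∀ M, (∀ z, M ≤ z → z = M) → x ≤ M}) ∧
    (∀ x ∈ {x : α | ∀ M, (∀ z, M ≤ z → z = M) → x ≤ M},
      ∀ y ∉ {x : α | ∀ M, (∀ z, M ≤ z → z = M) → x ≤ M}, x ≤ y) := by
  classical
  obtain ⟨M, M', hMM', hM, hM'⟩ := hmax
  -- key consequence of WN
  have L : ∀ x y z m : α, x < z → y < z → y ≤ m → (∀ w, m ≤ w → w = m) → ¬ x ≤ m → y ≤ x := by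
    intro x y z m hxz hyz hym hm hxm
    have hyltm : y < m := by
      refine lt_of_le_of_ne hym ?_
      rintro rfl
      exact absurd (hm z hyz.le) (ne_of_gt hyz)
    by_contra hyx
    refine hWN ⟨x, y, z, m, hxz, hyz, hyltm, ?_, hyx, hxm, ?_, ?_, ?_⟩
    · intro h; exact hxm (h.trans hym)
    · intro h; exact hxm ((hm x h) ▸ le_refl x)
    · intro h; exact hxm (hxz.le.trans h)
    · intro h; exact hxm ((hm z h) ▸ hxz.le)
  -- every element lies below a maximal element
  have exmax : ∀ x : α, ∃ m, x ≤ m ∧ ∀ z, m ≤ z → z = m := by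
    intro x
    obtain ⟨m, hm, hmax⟩ := Finset.exists_maximal (s := Finset.univ.filter (fun y => x ≤ y))
      ⟨x, by simp⟩
    simp only [Finset.mem_filter, Finset.mem_univ, true_and] at hm hmax
    refine ⟨m, hm, fun z hz => ?_⟩
    by_contra hne
    exact hne (le_antisymm (hmax (hm.trans hz) hz) hz)
  -- connectedness of the "common lower bound" graph on maximal elements
  set S : α → α → Prop := fun p q =>
    (∀ z, p ≤ z → z = p) ∧ (∀ z, q ≤ z → z = q) ∧ ∃ w, w ≤ p ∧ w ≤ q with hS
  have conn : ∀ x (m : α), x ≤ m → (∀ z, m ≤ z → z = m) → ∀ y (m' : α), y ≤ m' →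
      (∀ z, m' ≤ z → z = m') → Relation.ReflTransGen S m m' := by
    intro x m hxm hmmax y
    induction hconn x y with
    | refl =>
      intro m' hym' hm'max
      exact Relation.ReflTransGen.single ⟨hmmax, hm'max, x, hxm, hym'⟩
    | @tail b c hpath hstep ih =>
      intro m' hym' hm'max
      obtain ⟨n, hbn, hnmax⟩ := exmax b
      refine (ih n hbn hnmax).trans (Relation.ReflTransGen.single ?_)
      refine ⟨hnmax, hm'max, ?_⟩
      rcases hstep with h | h
      · exact ⟨b, hbn, h.trans hym'⟩
      · exact ⟨c, h.trans hbn, hym'⟩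
  -- minimal elements are below every maximal element
  have Min : ∀ a : α, (∀ z, z ≤ a → z = a) → ∀ m : α, (∀ z, m ≤ z → z = m) → a ≤ m := by
    intro a hamin m hmmax
    obtain ⟨m0, ham0, hm0max⟩ := exmax a
    have hpath : Relation.ReflTransGen S m0 m :=
      conn a m0 ham0 hm0max m m le_rfl hmmax
    -- invariant: a ≤ · along the path
    clear hmmax
    induction hpath with
    | refl => exact ham0
    | @tail p q hp hstep ih =>
      obtain ⟨hpmax, hqmax, w, hwp, hwq⟩ := hstep
      rcases eq_or_lt_of_le ih with heq | hap
      · -- a = p : a is both minimal and maximal, contradiction with two maximals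
        exfalso
        have key : ∀ b : α, Relation.ReflTransGen (fun u v => u ≤ v ∨ v ≤ u) a b → b = a := by
          intro b hb
          induction hb with
          | refl => rfl
          | @tail u v hu hstep2 ih2 =>
            subst ih2
            rcases hstep2 with h | h
            · exact (heq ▸ hpmax) v h
            · exact hamin v h
        exact hMM' ((key M (hconn a M)).trans (key M' (hconn a M')).symm)
      · rcases eq_or_lt_of_le hwp with rfl | hwp'
        · exact ih.trans ((hpmax q hwq) ▸ le_rfl)
        · by_contra haq
          have hwa : w ≤ a := L a w p q hap hwp' hwq hqmax haq
          exact haq ((hamin w hwa) ▸ hwq)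
  have hMnot : M ∉ {x : α | ∀ N, (∀ z, N ≤ z → z = N) → x ≤ N} := by
    intro h
    exact hMM' (hM M' (h M' hM')).symm
  obtain ⟨a, _, hamin'⟩ := Finset.exists_minimal (s := (Finset.univ : Finset α)) ⟨M, Finset.mem_univ M⟩
  have hamin : ∀ z, z ≤ a → z = a := by
    intro z hz
    by_contra hne
    exact hne (le_antisymm hz (hamin' (Finset.mem_univ z) hz))
  refine ⟨⟨a, fun m hm => Min a hamin m hm⟩, ⟨M, hMnot⟩, ?_, ?_, ?_⟩
  · intro x hx m hm
    exact Min x hx m hm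
  · intro x hxmax hmem
    exact hMM' ((hxmax M (hmem M hM)).trans (hxmax M' (hmem M' hM')).symm)
  · intro x hx y hy
    simp only [Set.mem_setOf_eq, not_forall] at hx hy
    obtain ⟨m, hmmax, hym⟩ := hy
    obtain ⟨m', hym', hm'max⟩ := exmax y
    have hxm' : x ≤ m' := hx m' hm'max
    have hxm : x ≤ m := hx m hmmax
    rcases eq_or_lt_of_le hym' with rfl | hylt
    · exact hxm'
    rcases eq_or_lt_of_le hxm' with rfl | hxlt
    · exact absurd (hym'.trans hxm) hym
    exact L y x m' m hylt hxlt hxm hmmax hym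
end
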